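/- Let v₁, v₂, u : ℍ → ℂ and l ∈ ℤ. Suppose for k = l and k = l+1 there exist polynomials p_k^{(1)}, p_k^{(2)} ∈ ℤ[t] with U₂(u t^k) = v₁ p_k^{(1)}(t) + v₂ p_k^{(2)}(t) and ord_t(p_k^{(i)}) ≥ ⌈(k+s_i)/2⌉ for fixed integers s₁, s₂. Then for every integer k ≥ l there exist such polynomials p_k^{(1)}, p_k^{(2)} ∈ ℤ[t] satisfying both conditions. -/

import Mathlib

open Complex Polynomial

/-- The Atkin operator `U₂(f)(τ) = (1/2) ∑_{λ=0}^{1} f((τ+λ)/2)`. -/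
noncomputable def U2 (f : ℂ → ℂ) (τ : ℂ) : ℂ :=
  (1 / 2 : ℂ) * (f (τ / 2) + f ((τ + 1) / 2))

lemma ceil_half_eq (m : ℤ) : ⌈((m : ℤ) : ℚ) / 2⌉ = -((-m) / 2) := by
  rw [show (((m : ℤ) : ℚ) / 2) = -(((-m : ℤ) : ℚ) / ((2 : ℕ) : ℚ)) by push_cast; ring,
    Int.ceil_neg, Rat.floor_intCast_div_natCast]
  norm_num

lemma coeff_mul_bound (p q : Polynomial ℤ) (a b : ℤ)
    (hp : ∀ n : ℕ, p.coeff n ≠ 0 → a ≤ (n : ℤ))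
    (hq : ∀ n : ℕ, q.coeff n ≠ 0 → b ≤ (n : ℤ)) :
    ∀ n : ℕ, (p * q).coeff n ≠ 0 → a + b ≤ (n : ℤ) := by
  intro n h
  rw [Polynomial.coeff_mul] at h
  obtain ⟨⟨i, j⟩, hij, hne⟩ := Finset.exists_ne_zero_of_sum_ne_zero h
  rw [Finset.HasAntidiagonal.mem_antidiagonal] at hij
  have hi := hp i (fun h0 => hne (by simp [h0]))
  have hj := hq j (fun h0 => hne (by simp [h0]))
  have : (n : ℤ) = i + j := by exact_mod_cast congrArg (Nat.cast : ℕ → ℤ) hij.symm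
  omega

/-- Lemma 4.1: let `v₁, v₂, u : ℍ → ℂ`, `l ∈ ℤ`, and let `t` satisfy the three-term
recursion `U₂(u tʲ) = −(2t²+t)·U₂(u t^{j−2}) + (4t²+2t)·U₂(u t^{j−1})`.  If for
`k = l, l+1` there are `p_k⁽¹⁾, p_k⁽²⁾ ∈ ℤ[t]` with
`U₂(u tᵏ) = v₁ p_k⁽¹⁾(t) + v₂ p_k⁽²⁾(t)` and `ord_t(p_k⁽ⁱ⁾) ≥ ⌈(k+sᵢ)/2⌉` (every
nonzero coefficient sits in degree `≥ ⌈(k+sᵢ)/2⌉`), then such polynomials exist for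
every integer `k ≥ l`. -/
theorem U2_polynomial_representation (t u v₁ v₂ : ℂ → ℂ) (s₁ s₂ l : ℤ)
    (hrec : ∀ (w : ℂ → ℂ) (j : ℤ) (τ : ℂ), 0 < τ.im →
      U2 (fun σ => w σ * t σ ^ j) τ =
        -(2 * t τ ^ 2 + t τ) * U2 (fun σ => w σ * t σ ^ (j - 2)) τ +
          (4 * t τ ^ 2 + 2 * t τ) * U2 (fun σ => w σ * t σ ^ (j - 1)) τ)
    (hbase : ∀ k : ℤ, (k = l ∨ k = l + 1) →
      ∃ p₁ p₂ : Polynomial ℤ,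
        (∀ τ : ℂ, 0 < τ.im →
          U2 (fun σ => u σ * t σ ^ k) τ =
            v₁ τ * aeval (t τ) p₁ + v₂ τ * aeval (t τ) p₂) ∧
        (∀ n : ℕ, p₁.coeff n ≠ 0 → ⌈((k + s₁ : ℤ) : ℚ) / 2⌉ ≤ (n : ℤ)) ∧
        (∀ n : ℕ, p₂.coeff n ≠ 0 → ⌈((k + s₂ : ℤ) : ℚ) / 2⌉ ≤ (n : ℤ))) :
    ∀ k : ℤ, l ≤ k →
      ∃ p₁ p₂ : Polynomial ℤ,
        (∀ τ : ℂ, 0 < τ.im →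
          U2 (fun σ => u σ * t σ ^ k) τ =
            v₁ τ * aeval (t τ) p₁ + v₂ τ * aeval (t τ) p₂) ∧
        (∀ n : ℕ, p₁.coeff n ≠ 0 → ⌈((k + s₁ : ℤ) : ℚ) / 2⌉ ≤ (n : ℤ)) ∧
        (∀ n : ℕ, p₂.coeff n ≠ 0 → ⌈((k + s₂ : ℤ) : ℚ) / 2⌉ ≤ (n : ℤ)) := by
  set P : ℤ → Prop := fun k =>
      ∃ p₁ p₂ : Polynomial ℤ,
        (∀ τ : ℂ, 0 < τ.im →
          U2 (fun σ => u σ * t σ ^ k) τ =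
            v₁ τ * aeval (t τ) p₁ + v₂ τ * aeval (t τ) p₂) ∧
        (∀ n : ℕ, p₁.coeff n ≠ 0 → ⌈((k + s₁ : ℤ) : ℚ) / 2⌉ ≤ (n : ℤ)) ∧
        (∀ n : ℕ, p₂.coeff n ≠ 0 → ⌈((k + s₂ : ℤ) : ℚ) / 2⌉ ≤ (n : ℤ)) with hP
  -- properties of the multiplier polynomials
  set q : Polynomial ℤ := -(2 * X ^ 2 + X) with hq
  set r : Polynomial ℤ := 4 * X ^ 2 + 2 * X with hr
  have hqc : ∀ n : ℕ, q.coeff n ≠ 0 → (1 : ℤ) ≤ (n : ℤ) := by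
    intro n h
    match n with
    | 0 => exfalso; apply h; simp [hq]
    | (m+1) => push_cast; omega
  have hrc : ∀ n : ℕ, r.coeff n ≠ 0 → (1 : ℤ) ≤ (n : ℤ) := by
    intro n h
    match n with
    | 0 => exfalso; apply h; simp [hr]
    | (m+1) => push_cast; omega
  -- the inductive step
  have step : ∀ j : ℤ, P j → P (j + 1) → P (j + 2) := by
    intro j ⟨a₁, a₂, ha, ha₁, ha₂⟩ ⟨b₁, b₂, hb, hb₁, hb₂⟩
    refine ⟨q * a₁ + r * b₁, q * a₂ + r * b₂, ?_, ?_, ?_⟩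
    · intro τ hτ
      have h := hrec u (j + 2) τ hτ
      have e2 : j + 2 - 2 = j := by ring
      have e1 : j + 2 - 1 = j + 1 := by ring
      rw [e2, e1, ha τ hτ, hb τ hτ] at h
      rw [h]
      simp only [map_add, map_mul, map_neg, map_ofNat, aeval_X, Polynomial.aeval_one,
        map_pow, hq, hr]
      ring
    · intro n hn
      have key : ⌈((j + 2 + s₁ : ℤ) : ℚ) / 2⌉ ≤ (n : ℤ) := by
        rcases (by by_contra hc; push_neg at hc; exact hn (by
          rw [Polynomial.coeff_add]
          rcases hc with ⟨h1, h2⟩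
          rw [h1, h2, add_zero]) :
          (q * a₁).coeff n ≠ 0 ∨ (r * b₁).coeff n ≠ 0) with h | h
        · have := coeff_mul_bound q a₁ 1 _ hqc ha₁ n h
          rw [ceil_half_eq] at this ⊢; omega
        · have := coeff_mul_bound r b₁ 1 _ hrc hb₁ n h
          rw [ceil_half_eq] at this ⊢; omega
      exact key
    · intro n hn
      have key : ⌈((j + 2 + s₂ : ℤ) : ℚ) / 2⌉ ≤ (n : ℤ) := by
        rcases (by by_contra hc; push_neg at hc; exact hn (by
          rw [Polynomial.coeff_add]
          rcases hc with ⟨h1, h2⟩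
          rw [h1, h2, add_zero]) :
          (q * a₂).coeff n ≠ 0 ∨ (r * b₂).coeff n ≠ 0) with h | h
        · have := coeff_mul_bound q a₂ 1 _ hqc ha₂ n h
          rw [ceil_half_eq] at this ⊢; omega
        · have := coeff_mul_bound r b₂ 1 _ hrc hb₂ n h
          rw [ceil_half_eq] at this ⊢; omega
      exact key
  -- strong induction via pairs
  have pair : ∀ k : ℤ, l ≤ k → P k ∧ P (k + 1) := by
    refine Int.le_induction ⟨hbase l (Or.inl rfl), hbase (l + 1) (Or.inr rfl)⟩ ?_
    intro m _ ih
    refine ⟨ih.2, ?_⟩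
    have := step m ih.1 ih.2
    rwa [show m + 2 = m + 1 + 1 by ring] at this
  exact fun k hk => (pair k hk).1
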